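/- For every integer n ≥ 1 and all nonnegative integers a, b, c with a + b + c = 2^n, the probability vector (a/2^n, b/2^n, c/2^n) on 3 states is realizable from the switch set S = {(1/2, 0, 1/2)} with at most 2n − 1 pswitches. -/

import Mathlib

noncomputable section

/-- Series composition: distribution of `min` of two independent states. -/
def smin {N : ℕ} (p q : Fin N → ℝ) : Fin N → ℝ :=
  fun k => ∑ i, ∑ j, if min i j = k then p i * q j else 0

/-- Parallel composition: distribution of `max` of two independent states. -/
def smax {N : ℕ} (p q : Fin N → ℝ) : Fin N → ℝ :=
  fun k => ∑ i, ∑ j, if max i j = k then p i * q j else 0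

/-- The point mass at state `s`. -/
def delta {N : ℕ} (s : Fin N) : Fin N → ℝ := fun i => if i = s then 1 else 0

/-- `Realizable S p m`: the vector `p` is obtained from point masses (0 pswitches)
and elements of the switch set `S` (1 pswitch each) by series and parallel
compositions, using `m` pswitches in total. -/
inductive Realizable {N : ℕ} (S : Set (Fin N → ℝ)) : (Fin N → ℝ) → ℕ → Prop
  | point (s : Fin N) : Realizable S (delta s) 0
  | single {p : Fin N → ℝ} : p ∈ S → Realizable S p 1
  | series {p q : Fin N → ℝ} {a b : ℕ} :
      Realizable S p a → Realizable S q b → Realizable S (smin p q) (a + b)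
  | parallel {p q : Fin N → ℝ} {a b : ℕ} :
      Realizable S p a → Realizable S q b → Realizable S (smax p q) (a + b)

/-! ### Auxiliary development -/

/-- Convenient constructor for vectors on three states. -/
def V (x y z : ℝ) : Fin 3 → ℝ := fun i => if i = 0 then x else if i = 1 then y else z

/-- The switch set. -/
def Sr : Set (Fin 3 → ℝ) :=
  {fun i : Fin 3 => if i = 0 then (1 : ℝ) / 2 else if i = 2 then (1 : ℝ) / 2 else 0}

lemma V_ext {x y z x' y' z' : ℝ} (h1 : x = x') (h2 : y = y') (h3 : z = z') :
    V x y z = V x' y' z' := by rw [h1, h2, h3]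

lemma smin_V (x y z x' y' z' : ℝ) :
    smin (V x y z) (V x' y' z') =
      V (x*x'+x*y'+x*z'+y*x'+z*x') (y*y'+y*z'+z*y') (z*z') := by
  funext k
  fin_cases k <;> simp [smin, V, Fin.sum_univ_three] <;> ring

lemma smax_V (x y z x' y' z' : ℝ) :
    smax (V x y z) (V x' y' z') =
      V (x*x') (y*y'+x*y'+y*x') (z*z'+z*x'+z*y'+x*z'+y*z') := by
  funext k
  fin_cases k <;> simp [smax, V, Fin.sum_univ_three] <;> ring

lemma delta0_eq : delta (0 : Fin 3) = V 1 0 0 := by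
  funext k; fin_cases k <;> simp [delta, V]
lemma delta1_eq : delta (1 : Fin 3) = V 0 1 0 := by
  funext k; fin_cases k <;> simp [delta, V]
lemma delta2_eq : delta (2 : Fin 3) = V 0 0 1 := by
  funext k; fin_cases k <;> simp [delta, V]

/-- Existence versions of the constructors. -/
lemma exR_eq {p q : Fin 3 → ℝ} {B : ℕ} (h : ∃ m ≤ B, Realizable Sr p m) (e : p = q) :
    ∃ m ≤ B, Realizable Sr q m := e ▸ h

lemma exR_mono {p : Fin 3 → ℝ} {B1 B2 : ℕ} (h : ∃ m ≤ B1, Realizable Sr p m) (hb : B1 ≤ B2) :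
    ∃ m ≤ B2, Realizable Sr p m := by
  obtain ⟨m, hm, hr⟩ := h; exact ⟨m, le_trans hm hb, hr⟩

lemma exR_min {p q : Fin 3 → ℝ} {B1 B2 : ℕ} (h1 : ∃ m ≤ B1, Realizable Sr p m)
    (h2 : ∃ m ≤ B2, Realizable Sr q m) :
    ∃ m ≤ B1 + B2, Realizable Sr (smin p q) m := by
  obtain ⟨m1, hm1, hr1⟩ := h1; obtain ⟨m2, hm2, hr2⟩ := h2
  exact ⟨m1 + m2, by omega, .series hr1 hr2⟩

lemma exR_max {p q : Fin 3 → ℝ} {B1 B2 : ℕ} (h1 : ∃ m ≤ B1, Realizable Sr p m)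
    (h2 : ∃ m ≤ B2, Realizable Sr q m) :
    ∃ m ≤ B1 + B2, Realizable Sr (smax p q) m := by
  obtain ⟨m1, hm1, hr1⟩ := h1; obtain ⟨m2, hm2, hr2⟩ := h2
  exact ⟨m1 + m2, by omega, .parallel hr1 hr2⟩

lemma exR_d0 : ∃ m ≤ 0, Realizable Sr (V 1 0 0) m :=
  ⟨0, le_refl 0, delta0_eq ▸ Realizable.point 0⟩
lemma exR_d1 : ∃ m ≤ 0, Realizable Sr (V 0 1 0) m :=
  ⟨0, le_refl 0, delta1_eq ▸ Realizable.point 1⟩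
lemma exR_d2 : ∃ m ≤ 0, Realizable Sr (V 0 0 1) m :=
  ⟨0, le_refl 0, delta2_eq ▸ Realizable.point 2⟩

/-- The switch itself. -/
lemma exR_r : ∃ m ≤ 1, Realizable Sr (V (1/2) 0 (1/2)) m := by
  refine ⟨1, le_refl 1, ?_⟩
  have e : (fun i : Fin 3 => if i = 0 then (1 : ℝ) / 2 else if i = 2 then (1 : ℝ) / 2 else 0)
      = V (1/2) 0 (1/2) := by
    funext k; fin_cases k <;> simp [V]
  exact e ▸ Realizable.single rfl

/-- The switch composed in series with `δ₁`: `(1/2, 1/2, 0)`. -/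
lemma exR_Ar : ∃ m ≤ 1, Realizable Sr (V (1/2) (1/2) 0) m := by
  refine exR_eq (exR_mono (exR_min exR_r exR_d1) (by norm_num)) ?_
  rw [smin_V]; exact V_ext (by norm_num) (by norm_num) (by norm_num)

/-- The switch composed in parallel with `δ₁`: `(0, 1/2, 1/2)`. -/
lemma exR_Br : ∃ m ≤ 1, Realizable Sr (V 0 (1/2) (1/2)) m := by
  refine exR_eq (exR_mono (exR_max exR_r exR_d1) (by norm_num)) ?_
  rw [smax_V]; exact V_ext (by norm_num) (by norm_num) (by norm_num)

/-- Two-state distributions on `{0,1}`. -/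
lemma TS01 : ∀ n a b : ℕ, a + b = 2 ^ n →
    ∃ m ≤ n, Realizable Sr (V ((a : ℝ)/2^n) ((b : ℝ)/2^n) 0) m := by
  intro n
  induction n with
  | zero =>
    intro a b h
    have hab : (a = 1 ∧ b = 0) ∨ (a = 0 ∧ b = 1) := by omega
    rcases hab with ⟨rfl, rfl⟩ | ⟨rfl, rfl⟩
    · exact exR_eq exR_d0 (V_ext (by norm_num) (by norm_num) rfl)
    · exact exR_eq exR_d1 (V_ext (by norm_num) (by norm_num) rfl)
  | succ n ih =>
    intro a b h
    by_cases ha : 2 ^ n ≤ a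
    · obtain ⟨a', rfl⟩ := Nat.exists_eq_add_of_le ha
      have h' : a' + b = 2 ^ n := by have := pow_succ 2 n; omega
      have hre : (a' : ℝ) + b = 2 ^ n := by exact_mod_cast h'
      refine exR_eq (exR_min (ih a' b h') exR_Ar) ?_
      rw [smin_V]
      refine V_ext ?_ ?_ (by ring)
      · push_cast; linear_combination hre / 2 ^ (n + 1)
      · push_cast; ring
    · have hb : 2 ^ n ≤ b := by have := pow_succ 2 n; omega
      obtain ⟨b', rfl⟩ := Nat.exists_eq_add_of_le hb
      have h' : a + b' = 2 ^ n := by have := pow_succ 2 n; omega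
      have hre : (a : ℝ) + b' = 2 ^ n := by exact_mod_cast h'
      refine exR_eq (exR_max (ih a b' h') exR_Ar) ?_
      rw [smax_V]
      refine V_ext ?_ ?_ (by ring)
      · push_cast; ring
      · push_cast; linear_combination hre / 2 ^ (n + 1)

/-- Two-state distributions on `{1,2}`. -/
lemma TS12 : ∀ k b c : ℕ, b + c = 2 ^ k →
    ∃ m ≤ k, Realizable Sr (V 0 ((b : ℝ)/2^k) ((c : ℝ)/2^k)) m := by
  intro k
  induction k with
  | zero =>
    intro b c h
    have hbc : (b = 1 ∧ c = 0) ∨ (b = 0 ∧ c = 1) := by omega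
    rcases hbc with ⟨rfl, rfl⟩ | ⟨rfl, rfl⟩
    · exact exR_eq exR_d1 (V_ext rfl (by norm_num) (by norm_num))
    · exact exR_eq exR_d2 (V_ext rfl (by norm_num) (by norm_num))
  | succ k ih =>
    intro b c h
    by_cases hc : 2 ^ k ≤ c
    · obtain ⟨c', rfl⟩ := Nat.exists_eq_add_of_le hc
      have h' : b + c' = 2 ^ k := by have := pow_succ 2 k; omega
      have hre : (b : ℝ) + c' = 2 ^ k := by exact_mod_cast h'
      refine exR_eq (exR_max (ih b c' h') exR_Br) ?_
      rw [smax_V]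
      refine V_ext (by ring) ?_ ?_
      · push_cast; ring
      · push_cast; linear_combination hre / 2 ^ (k + 1)
    · have hbb : 2 ^ k ≤ b := by have := pow_succ 2 k; omega
      obtain ⟨b', rfl⟩ := Nat.exists_eq_add_of_le hbb
      have h' : b' + c = 2 ^ k := by have := pow_succ 2 k; omega
      have hre : (b' : ℝ) + c = 2 ^ k := by exact_mod_cast h'
      refine exR_eq (exR_min (ih b' c h') exR_Br) ?_
      rw [smin_V]
      refine V_ext (by ring) ?_ ?_
      · push_cast; linear_combination hre / 2 ^ (k + 1)
      · push_cast; ring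

/-- Key lemma: vectors of the form `(a, b, 2^k)/2^n` with `n = k + d + 1` are
realizable with at most `k + 2d + 1` pswitches. -/
lemma HKey : ∀ d k a b : ℕ, a + b + 2 ^ k = 2 ^ (k + d + 1) →
    ∃ m ≤ k + 2 * d + 1,
      Realizable Sr (V ((a : ℝ)/2^(k+d+1)) ((b : ℝ)/2^(k+d+1)) ((2^k : ℝ)/2^(k+d+1))) m := by
  intro d
  induction d with
  | zero =>
    intro k a b h
    simp only [Nat.add_zero] at h
    have h' : a + b = 2 ^ k := by have := pow_succ 2 k; omega
    have hre : (a : ℝ) + b = 2 ^ k := by exact_mod_cast h'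
    refine exR_eq (exR_max (TS01 k a b h') exR_r) ?_
    rw [smax_V]
    refine V_ext ?_ ?_ ?_
    · push_cast; ring
    · push_cast; ring
    · push_cast; linear_combination hre / 2 ^ (k + 0 + 1)
  | succ d ih =>
    intro k a b h
    by_cases hbk : 2 ^ k ≤ b
    · -- halve the third coordinate: series with (0, 1/2, 1/2)
      obtain ⟨b', rfl⟩ := Nat.exists_eq_add_of_le hbk
      have h' : a + b' + 2 ^ (k + 1) = 2 ^ ((k + 1) + d + 1) := by
        have e1 : 2 ^ (k + 1) = 2 * 2 ^ k := by ring
        have e2 : (k + 1) + d + 1 = k + (d + 1) + 1 := by omega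
        rw [e1, e2]; omega
      refine exR_eq (exR_mono (exR_min (ih (k + 1) a b' h') exR_Br) (by omega)) ?_
      rw [smin_V]
      have e2 : (k + 1) + d + 1 = k + (d + 1) + 1 := by omega
      rw [e2] at *
      refine V_ext ?_ ?_ ?_
      · push_cast; ring
      · push_cast; ring
      · push_cast; ring
    · -- first coordinate is large: series with the switch
      have hak : 2 ^ (k + d + 1) ≤ a := by
        have e1 : 2 ^ (k + d + 2) = 2 * 2 ^ (k + d + 1) := by ring
        have e2 : 2 * 2 ^ k ≤ 2 ^ (k + d + 1) := by
          calc 2 * 2 ^ k = 2 ^ (k + 1) := by ring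
          _ ≤ 2 ^ (k + d + 1) := Nat.pow_le_pow_right (by norm_num) (by omega)
        have e3 : k + (d + 1) + 1 = k + d + 2 := by omega
        rw [e3, e1] at h
        omega
      obtain ⟨a', rfl⟩ := Nat.exists_eq_add_of_le hak
      have h' : a' + b + 2 ^ k = 2 ^ (k + d + 1) := by
        have e1 : 2 ^ (k + d + 2) = 2 * 2 ^ (k + d + 1) := by ring
        have e3 : k + (d + 1) + 1 = k + d + 2 := by omega
        rw [e3, e1] at h
        omega
      have hre : (a' : ℝ) + b + 2 ^ k = 2 ^ (k + d + 1) := by exact_mod_cast h'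
      refine exR_eq (exR_mono (exR_min (ih k a' b h') exR_r) (by omega)) ?_
      rw [smin_V]
      have e3 : k + (d + 1) + 1 = (k + d + 1) + 1 := by omega
      rw [e3]
      refine V_ext ?_ ?_ ?_
      · push_cast; linear_combination hre / 2 ^ (k + d + 1 + 1)
      · push_cast; ring
      · push_cast; ring

/-- Main lemma, by induction on `n` (with the `ℕ`-truncated bound `2n - 1`). -/
lemma Main : ∀ n a b c : ℕ, a + b + c = 2 ^ n →
    ∃ m ≤ 2 * n - 1,
      Realizable Sr (V ((a : ℝ)/2^n) ((b : ℝ)/2^n) ((c : ℝ)/2^n)) m := by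
  intro n
  induction n with
  | zero =>
    intro a b c h
    have habc : (a = 1 ∧ b = 0 ∧ c = 0) ∨ (a = 0 ∧ b = 1 ∧ c = 0)
        ∨ (a = 0 ∧ b = 0 ∧ c = 1) := by omega
    rcases habc with ⟨rfl, rfl, rfl⟩ | ⟨rfl, rfl, rfl⟩ | ⟨rfl, rfl, rfl⟩
    · exact exR_eq exR_d0 (V_ext (by norm_num) (by norm_num) (by norm_num))
    · exact exR_eq exR_d1 (V_ext (by norm_num) (by norm_num) (by norm_num))
    · exact exR_eq exR_d2 (V_ext (by norm_num) (by norm_num) (by norm_num))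
  | succ n ih =>
    intro a b c h
    by_cases hc2 : 2 ^ n ≤ c
    · -- parallel with the switch
      obtain ⟨c', rfl⟩ := Nat.exists_eq_add_of_le hc2
      have h' : a + b + c' = 2 ^ n := by have := pow_succ 2 n; omega
      have hre : (a : ℝ) + b + c' = 2 ^ n := by exact_mod_cast h'
      refine exR_eq (exR_mono (exR_max (ih a b c' h') exR_r) (by omega)) ?_
      rw [smax_V]
      refine V_ext ?_ ?_ ?_
      · push_cast; ring
      · push_cast; ring
      · push_cast; linear_combination hre / 2 ^ (n + 1)
    · by_cases hc0 : c = 0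
      · subst hc0
        refine exR_eq (exR_mono (TS01 (n + 1) a b (by omega)) (by omega)) ?_
        exact V_ext rfl rfl (by norm_num)
      · -- 1 ≤ c < 2^n
        set k := Nat.clog 2 c with hk
        have hck : c ≤ 2 ^ k := Nat.le_pow_clog (by norm_num) c
        have hkn : k ≤ n := by
          have h1 : Nat.clog 2 c ≤ Nat.clog 2 (2 ^ n) := Nat.clog_mono_right 2 (by omega)
          rwa [Nat.clog_pow 2 n (by norm_num)] at h1
        by_cases hkbc : 2 ^ k ≤ b + c
        · -- combine HKey with a two-state distribution on {1,2}
          obtain ⟨d, hd⟩ : ∃ d, n = k + d := Nat.exists_eq_add_of_le hkn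
          have h1 : a + (b + c - 2 ^ k) + 2 ^ k = 2 ^ (k + d + 1) := by
            rw [← hd]; omega
          have h2 : (2 ^ k - c) + c = 2 ^ k := by omega
          refine exR_eq (exR_mono (exR_min (HKey d k a (b + c - 2 ^ k) h1)
            (TS12 k (2 ^ k - c) c h2)) (by omega)) ?_
          rw [smin_V]
          have e1 : k + d + 1 = n + 1 := by omega
          rw [e1]
          have c1 : ((b + c - 2 ^ k : ℕ) : ℝ) = (b : ℝ) + c - 2 ^ k := by
            push_cast [Nat.cast_sub hkbc]; ring
          have c2 : ((2 ^ k - c : ℕ) : ℝ) = (2 ^ k : ℝ) - c := by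
            push_cast [Nat.cast_sub hck]; ring
          have hpk : (2 : ℝ) ^ k ≠ 0 := by positivity
          refine V_ext ?_ ?_ ?_
          · rw [c1, c2]; push_cast; field_simp; ring
          · rw [c1, c2]; push_cast; field_simp; ring
          · field_simp
        · -- first coordinate is large: series with the switch
          have ha : 2 ^ n ≤ a := by
            have e2 : 2 ^ k ≤ 2 ^ n := Nat.pow_le_pow_right (by norm_num) hkn
            have := pow_succ 2 n; omega
          obtain ⟨a', rfl⟩ := Nat.exists_eq_add_of_le ha
          have h' : a' + b + c = 2 ^ n := by have := pow_succ 2 n; omega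
          have hre : (a' : ℝ) + b + c = 2 ^ n := by exact_mod_cast h'
          refine exR_eq (exR_mono (exR_min (ih a' b c h') exR_r) (by omega)) ?_
          rw [smin_V]
          refine V_ext ?_ ?_ ?_
          · push_cast; linear_combination hre / 2 ^ (n + 1)
          · push_cast; ring
          · push_cast; ring
/-- Binary 3-state distributions: every `(a/2^n, b/2^n, c/2^n)` is realizable from
the switch set `{(1/2, 0, 1/2)}` using at most `2n - 1` pswitches. -/
theorem binary_three_state (n : ℕ) (hn : 1 ≤ n) (a b c : ℕ) (h : a + b + c = 2 ^ n) :
    ∃ m ≤ 2 * n - 1,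
      Realizable
        ({fun i : Fin 3 => if i = 0 then (1 : ℝ) / 2 else if i = 2 then (1 : ℝ) / 2 else 0} :
          Set (Fin 3 → ℝ))
        (fun i : Fin 3 =>
          if i = 0 then (a : ℝ) / 2 ^ n else if i = 1 then (b : ℝ) / 2 ^ n else (c : ℝ) / 2 ^ n)
        m := by
  exact Main n a b c h
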